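/- Any two vertices of a tree are linearly equivalent as divisors: for a tree T and vertices v, w, the divisors v and w differ by an element of the image of the Laplacian of T. -/

import Mathlib

open Finset

lemma adj_lin_equiv {V : Type} [Fintype V] [DecidableEq V] (G : SimpleGraph V) [DecidableRel G.Adj]
    (hac : G.IsAcyclic) {v w : V} (hvw : G.Adj v w) :
    ∃ f : V → ℤ,
      (fun u => (if u = v then (1 : ℤ) else 0) - if u = w then 1 else 0)
        = (G.lapMatrix ℤ).mulVec f := by
  classical
  set G' := G \ SimpleGraph.fromEdgeSet {s(v, w)} with hG'
  have hbridge : ¬ G'.Reachable v w :=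
    ((SimpleGraph.isBridge_iff).mp
      ((SimpleGraph.isAcyclic_iff_forall_adj_isBridge.mp hac) hvw))
  have hvv : G'.Reachable v v := SimpleGraph.Reachable.refl v
  have hne : v ≠ w := hvw.ne
  -- key step lemma
  have hstep : ∀ a b : V, G.Adj a b → G'.Reachable v a →
      G'.Reachable v b ∨ (a = v ∧ b = w) := by
    intro a b hab hra
    by_cases he : s(a, b) = s(v, w)
    · rcases Sym2.eq_iff.mp he with ⟨rfl, rfl⟩ | ⟨rfl, rfl⟩
      · exact Or.inr ⟨rfl, rfl⟩
      · exact absurd hra hbridge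
    · left
      refine hra.trans (SimpleGraph.Adj.reachable ?_)
      rw [hG', SimpleGraph.sdiff_adj]
      refine ⟨hab, ?_⟩
      simp [he]
  refine ⟨fun u => if G'.Reachable v u then 1 else 0, ?_⟩
  funext u
  rw [SimpleGraph.lapMatrix_mulVec_apply]
  have hsum : (∑ x ∈ G.neighborFinset u, (if G'.Reachable v x then (1 : ℤ) else 0))
      = ((G.neighborFinset u).filter (fun x => G'.Reachable v x)).card := by
    rw [Finset.sum_boole]
  rw [hsum]
  by_cases hu : G'.Reachable v u
  · have huw : u ≠ w := fun h => hbridge (h ▸ hu)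
    by_cases huv : u = v
    · subst huv
      have hfil : (G.neighborFinset u).filter (fun x => G'.Reachable u x)
          = (G.neighborFinset u).erase w := by
        ext x
        simp only [Finset.mem_filter, Finset.mem_erase, SimpleGraph.mem_neighborFinset]
        constructor
        · rintro ⟨hx, hrx⟩
          exact ⟨fun h => hbridge (h ▸ hrx), hx⟩
        · rintro ⟨hxw, hx⟩
          refine ⟨hx, ?_⟩
          rcases hstep u x hx hvv with h | ⟨_, rfl⟩
          · exact h
          · exact absurd rfl hxw
      have hwmem : w ∈ G.neighborFinset u := (SimpleGraph.mem_neighborFinset _ _ _).mpr hvw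
      rw [hfil, Finset.card_erase_of_mem hwmem, SimpleGraph.card_neighborFinset_eq_degree]
      have hd : 1 ≤ G.degree u := by
        rw [← SimpleGraph.card_neighborFinset_eq_degree]
        exact Finset.card_pos.mpr ⟨w, hwmem⟩
      simp only [if_pos rfl, if_neg huw, hu, if_true]
      push_cast [hd]
      ring
    · have hfil : (G.neighborFinset u).filter (fun x => G'.Reachable v x)
          = G.neighborFinset u := by
        apply Finset.filter_true_of_mem
        intro x hx
        rcases hstep u x ((SimpleGraph.mem_neighborFinset _ _ _).mp hx) hu with h | ⟨h, _⟩
        · exact h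
        · exact absurd h huv
      rw [hfil, SimpleGraph.card_neighborFinset_eq_degree]
      simp [huv, huw, hu]
  · have huv : u ≠ v := fun h => hu (h ▸ hvv)
    by_cases huw : u = w
    · subst huw
      have hfil : (G.neighborFinset u).filter (fun x => G'.Reachable v x) = {v} := by
        ext x
        simp only [Finset.mem_filter, Finset.mem_singleton, SimpleGraph.mem_neighborFinset]
        constructor
        · rintro ⟨hx, hrx⟩
          rcases hstep x u hx.symm hrx with h | ⟨h, _⟩
          · exact absurd h hu
          · exact h
        · rintro rfl
          exact ⟨hvw.symm, hvv⟩
      rw [hfil]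
      simp [huv, hu]
    · have hfil : (G.neighborFinset u).filter (fun x => G'.Reachable v x) = ∅ := by
        apply Finset.filter_false_of_mem
        intro x hx hrx
        rcases hstep x u ((SimpleGraph.mem_neighborFinset _ _ _).mp hx).symm hrx with h | ⟨_, h⟩
        · exact hu h
        · exact huw h
      rw [hfil]
      simp [huv, huw, hu]

/-- Any two vertices of a tree are linearly equivalent as divisors: the difference of the
corresponding chip configurations lies in the image of the graph Laplacian. -/
theorem stmt4 {V : Type} [Fintype V] [DecidableEq V] (G : SimpleGraph V) [DecidableRel G.Adj]
    (ht : G.IsTree) (v w : V) :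
    ∃ f : V → ℤ,
      (fun u => (if u = v then (1 : ℤ) else 0) - if u = w then 1 else 0)
        = (G.lapMatrix ℤ).mulVec f := by
  classical
  obtain ⟨p⟩ := ht.isConnected v w
  induction p with
  | nil =>
      exact ⟨0, by funext u; simp [Matrix.mulVec_zero]⟩
  | @cons a b c hab p ih =>
      obtain ⟨f₂, hf₂⟩ := ih
      obtain ⟨f₁, hf₁⟩ := adj_lin_equiv G ht.IsAcyclic hab
      refine ⟨f₁ + f₂, ?_⟩
      rw [Matrix.mulVec_add, ← hf₁, ← hf₂]
      funext u
      simp only [Pi.add_apply]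
      ring
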